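/- Let n ≥ 1 and let Ω ⊆ EuclideanSpace ℝ (Fin n) be a bounded open set that is star-shaped with respect to every point of Metric.ball 0 ρ (ρ > 0) and contained in Metric.ball 0 R. Define the expansion function s : E → ℝ by s(0) = 0 and, for x ≠ 0, s(x) = ‖x‖ * sSup {t : ℝ | 0 < t ∧ t • (‖x‖⁻¹ • x) ∈ Ω}. Then for all x, y ∈ E one has |s(x) - s(y)| ≤ (R^2 / ρ) * ‖x - y‖. -/

import Mathlib

set_option maxHeartbeats 1000000

private lemma aux_bRY (R ρ X Y d t b : ℝ) (hρ : 0 < ρ) (hρR : ρ ≤ R)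
    (hX : 0 < X) (hd : 0 < d) (hXY : X - Y ≤ d) (ht0 : 0 < t) (htR : t < R)
    (hbdef : b = X * t - R ^ 2 / ρ * d) : b ≤ R * Y := by
  have hR : 0 < R := lt_of_lt_of_le hρ hρR
  have hC : R ≤ R ^ 2 / ρ := by
    rw [le_div_iff₀ hρ]; nlinarith
  have h1 : R ^ 2 / ρ * d ≥ R * d := by nlinarith
  have h2 : X * t < X * R := (mul_lt_mul_iff_right₀ hX).2 htR
  have h3 : R * (X - Y) ≤ R * d := by nlinarith
  nlinarith

private lemma aux_zsq (R ρ X Y d t b lam : ℝ) (hρ : 0 < ρ) (hρR : ρ ≤ R)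
    (hX : 0 < X) (hY : 0 < Y) (hd : 0 < d) (hXY : X - Y ≤ d) (ht0 : 0 < t) (htR : t < R)
    (hbdef : b = X * t - R ^ 2 / ρ * d) (hb0 : 0 < b)
    (hlamdef : lam = b / (X * t)) :
    ((1 - lam)⁻¹ * b) ^ 2 * (d / (X * Y)) ^ 2 < ρ ^ 2 := by
  have hR : 0 < R := lt_of_lt_of_le hρ hρR
  have hC0 : 0 < R ^ 2 / ρ := by positivity
  have ha0 : 0 < X * t := by positivity
  have haR : X * t < R * X := by nlinarith [(mul_lt_mul_iff_right₀ hX).2 htR]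
  have hbRY : b ≤ R * Y := aux_bRY R ρ X Y d t b hρ hρR hX hd hXY ht0 htR hbdef
  have h1lam : 1 - lam = (R ^ 2 / ρ * d) / (X * t) := by
    rw [hlamdef, hbdef]; field_simp; ring
  have hval : ((1 - lam)⁻¹ * b) ^ 2 * (d / (X * Y)) ^ 2
      = (X * t * b / (R ^ 2 / ρ * X * Y)) ^ 2 := by
    rw [h1lam]
    field_simp
  rw [hval]
  have hlt : X * t * b / (R ^ 2 / ρ * X * Y) < ρ := by
    rw [div_lt_iff₀ (by positivity)]
    have e1 : ρ * (R ^ 2 / ρ * X * Y) = R ^ 2 * (X * Y) := by field_simp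
    rw [e1]
    nlinarith [mul_pos hX hY]
  have hnn : 0 ≤ X * t * b / (R ^ 2 / ρ * X * Y) := by positivity
  exact pow_lt_pow_left₀ hlt hnn (by norm_num)

open scoped RealInnerProductSpace


/-- Part of Theorem 5 (`theorem:lipschitz_of_scalar_functions`): the expansion function
(reciprocal radial function) of a bounded star domain, star-shaped with respect to
`ball 0 ρ` and contained in `ball 0 R`, is Lipschitz with constant `R²/ρ`. -/
theorem expansion_function_lipschitz
    (n : ℕ) (hn : 1 ≤ n) (Ω : Set (EuclideanSpace ℝ (Fin n)))
    (hΩ : IsOpen Ω) (hbdd : Bornology.IsBounded Ω)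
    (R ρ : ℝ) (hρ : 0 < ρ)
    (hΩR : Ω ⊆ Metric.ball (0 : EuclideanSpace ℝ (Fin n)) R)
    (hstar : ∀ z ∈ Metric.ball (0 : EuclideanSpace ℝ (Fin n)) ρ, StarConvex ℝ z Ω)
    (s : EuclideanSpace ℝ (Fin n) → ℝ)
    (hs0 : s 0 = 0)
    (hs : ∀ x : EuclideanSpace ℝ (Fin n), x ≠ 0 →
      s x = ‖x‖ * sSup {t : ℝ | 0 < t ∧ t • (‖x‖⁻¹ • x) ∈ Ω}) :
    ∀ x y : EuclideanSpace ℝ (Fin n), |s x - s y| ≤ (R ^ 2 / ρ) * ‖x - y‖ := by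
  intro x y
  by_cases hne : Ω.Nonempty
  case neg =>
    rw [Set.not_nonempty_iff_eq_empty] at hne
    have hz : ∀ w : EuclideanSpace ℝ (Fin n), s w = 0 := by
      intro w
      by_cases hw : w = 0
      · rw [hw, hs0]
      · rw [hs w hw]
        have : {t : ℝ | 0 < t ∧ t • (‖w‖⁻¹ • w) ∈ Ω} = ∅ := by
          simp [hne]
        rw [this, Real.sSup_empty, mul_zero]
    rw [hz x, hz y, sub_zero, abs_zero]
    positivity
  case pos =>
    have hball : Metric.ball (0 : EuclideanSpace ℝ (Fin n)) ρ ⊆ Ω := by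
      intro z hz
      exact (hstar z hz).mem hne
    have h0Ω : (0 : EuclideanSpace ℝ (Fin n)) ∈ Ω :=
      hball (by simp [hρ])
    have hR : 0 < R := by
      have := hΩR h0Ω
      simpa using this
    have hρR : ρ ≤ R := by
      by_contra hcon
      push_neg at hcon
      set e : EuclideanSpace ℝ (Fin n) := EuclideanSpace.single ⟨0, hn⟩ (1:ℝ) with he
      have hen : ‖e‖ = 1 := by simp [he]
      have hmem : ((ρ + R)/2) • e ∈ Metric.ball (0 : EuclideanSpace ℝ (Fin n)) ρ := by
        rw [Metric.mem_ball, dist_zero_right, norm_smul, hen, mul_one, Real.norm_eq_abs,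
          abs_of_pos (by linarith)]
        linarith
      have := hΩR (hball hmem)
      rw [Metric.mem_ball, dist_zero_right, norm_smul, hen, mul_one, Real.norm_eq_abs,
        abs_of_pos (by linarith)] at this
      linarith
    have hRC : R ≤ R ^ 2 / ρ := by
      rw [le_div_iff₀ hρ]; nlinarith
    have hCpos : 0 < R ^ 2 / ρ := by positivity
    have hnorm : ∀ (w : EuclideanSpace ℝ (Fin n)), w ≠ 0 → ∀ c : ℝ,
        ‖c • (‖w‖⁻¹ • w)‖ = |c| := by
      intro w hw c
      have hwn : ‖w‖ ≠ 0 := norm_ne_zero_iff.2 hw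
      rw [norm_smul, norm_smul, Real.norm_eq_abs, Real.norm_eq_abs,
        abs_of_nonneg (inv_nonneg.2 (norm_nonneg w)), inv_mul_cancel₀ hwn, mul_one]
    have hbddT : ∀ (w : EuclideanSpace ℝ (Fin n)), w ≠ 0 →
        ∀ t ∈ {t : ℝ | 0 < t ∧ t • (‖w‖⁻¹ • w) ∈ Ω}, t ≤ R := by
      intro w hw t ht
      obtain ⟨ht0, htΩ⟩ := ht
      have := hΩR htΩ
      rw [Metric.mem_ball, dist_zero_right, hnorm w hw t, abs_of_pos ht0] at this
      exact this.le
    have hTne : ∀ (w : EuclideanSpace ℝ (Fin n)), w ≠ 0 →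
        ρ/2 ∈ {t : ℝ | 0 < t ∧ t • (‖w‖⁻¹ • w) ∈ Ω} := by
      intro w hw
      refine ⟨by positivity, hball ?_⟩
      rw [Metric.mem_ball, dist_zero_right, hnorm w hw, abs_of_pos (by positivity)]
      linarith
    have hsupT : ∀ (w : EuclideanSpace ℝ (Fin n)), w ≠ 0 →
        ρ/2 ≤ sSup {t : ℝ | 0 < t ∧ t • (‖w‖⁻¹ • w) ∈ Ω} ∧
        sSup {t : ℝ | 0 < t ∧ t • (‖w‖⁻¹ • w) ∈ Ω} ≤ R := by
      intro w hw
      constructor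
      · exact le_csSup ⟨R, fun t ht => hbddT w hw t ht⟩ (hTne w hw)
      · exact Real.sSup_le (hbddT w hw) hR.le
    have hsnn : ∀ w : EuclideanSpace ℝ (Fin n), 0 ≤ s w := by
      intro w
      by_cases hw : w = 0
      · rw [hw, hs0]
      · rw [hs w hw]
        exact mul_nonneg (norm_nonneg w)
          (le_trans (by positivity) (hsupT w hw).1)
    have hsub : ∀ w : EuclideanSpace ℝ (Fin n), s w ≤ R * ‖w‖ := by
      intro w
      by_cases hw : w = 0
      · rw [hw, hs0]; simp
      · rw [hs w hw, mul_comm R ‖w‖]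
        exact mul_le_mul_of_nonneg_left (hsupT w hw).2 (norm_nonneg w)
    have key : ∀ x y : EuclideanSpace ℝ (Fin n), x ≠ 0 → y ≠ 0 → x ≠ y →
        s x ≤ s y + (R ^ 2 / ρ) * ‖x - y‖ := by
      intro x y hx hy hxy
      have hX : 0 < ‖x‖ := norm_pos_iff.2 hx
      have hY : 0 < ‖y‖ := norm_pos_iff.2 hy
      have hd : 0 < ‖x - y‖ := norm_pos_iff.2 (sub_ne_zero.2 hxy)
      have hXY : ‖x‖ - ‖y‖ ≤ ‖x - y‖ := norm_sub_norm_le x y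
      rw [hs x hx, hs y hy]
      set Tx := {t : ℝ | 0 < t ∧ t • (‖x‖⁻¹ • x) ∈ Ω} with hTx
      set Ty := {t : ℝ | 0 < t ∧ t • (‖y‖⁻¹ • y) ∈ Ω} with hTy
      have hbTy : BddAbove Ty := ⟨R, fun t ht => hbddT y hy t ht⟩
      have hTygood : ρ/2 ≤ sSup Ty := le_csSup hbTy (hTne y hy)
      suffices h : ∀ t ∈ Tx, ‖x‖ * t ≤ ‖y‖ * sSup Ty + (R ^ 2 / ρ) * ‖x - y‖ by
        have h2 : sSup Tx ≤ (‖y‖ * sSup Ty + (R ^ 2 / ρ) * ‖x - y‖) / ‖x‖ :=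
          csSup_le ⟨ρ/2, hTne x hx⟩ (fun t ht => (le_div_iff₀ hX).2 (by
            rw [mul_comm]; exact h t ht))
        calc ‖x‖ * sSup Tx
            ≤ ‖x‖ * ((‖y‖ * sSup Ty + (R ^ 2 / ρ) * ‖x - y‖) / ‖x‖) :=
              mul_le_mul_of_nonneg_left h2 hX.le
          _ = ‖y‖ * sSup Ty + (R ^ 2 / ρ) * ‖x - y‖ := by field_simp
      intro t ht
      obtain ⟨ht0, htΩ⟩ := ht
      have htR : t < R := by
        have := hΩR htΩ
        rwa [Metric.mem_ball, dist_zero_right, hnorm x hx t, abs_of_pos ht0] at this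
      by_cases hb : 0 < ‖x‖ * t - (R ^ 2 / ρ) * ‖x - y‖
      case neg =>
        push_neg at hb
        have h0 : 0 ≤ ‖y‖ * sSup Ty :=
          mul_nonneg hY.le (le_trans (by positivity) hTygood)
        linarith
      case pos =>
        set b := ‖x‖ * t - (R ^ 2 / ρ) * ‖x - y‖ with hbdef
        set lam := b / (‖x‖ * t) with hlam
        have ha0 : 0 < ‖x‖ * t := by positivity
        have hlam0 : 0 < lam := div_pos hb ha0
        have hlam1 : lam < 1 := by
          rw [hlam, div_lt_one ha0]
          have : 0 < (R ^ 2 / ρ) * ‖x - y‖ := by positivity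
          rw [hbdef]; linarith
        have h1lam0 : (0:ℝ) < 1 - lam := by linarith
        set w : EuclideanSpace ℝ (Fin n) := (‖y‖^2)⁻¹ • y - (‖x‖^2)⁻¹ • x with hw
        set z : EuclideanSpace ℝ (Fin n) := ((1 - lam)⁻¹ * b) • w with hz
        have hinner : (inner ℝ x y : ℝ) = (‖x‖^2 + ‖y‖^2 - ‖x - y‖^2)/2 := by
          have h1 : ‖x - y‖^2 = ‖x‖^2 - 2 * (inner ℝ x y : ℝ) + ‖y‖^2 :=
            norm_sub_sq_real x y
          linarith
        have hyx : (inner ℝ y x : ℝ) = (‖x‖^2 + ‖y‖^2 - ‖x - y‖^2)/2 := by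
          rw [real_inner_comm]; exact hinner
        have hxx : (inner ℝ x x : ℝ) = ‖x‖^2 := real_inner_self_eq_norm_sq x
        have hyy : (inner ℝ y y : ℝ) = ‖y‖^2 := real_inner_self_eq_norm_sq y
        have hw2 : ‖w‖^2 = (‖x - y‖ / (‖x‖ * ‖y‖))^2 := by
          have h1 : ‖w‖^2 = (inner ℝ w w : ℝ) := (real_inner_self_eq_norm_sq w).symm
          rw [h1, hw]
          simp only [inner_sub_left, inner_sub_right, real_inner_smul_left,
            real_inner_smul_right]
          rw [hyx, hxx, hyy, hinner]
          have hX2 : (‖x‖:ℝ)^2 ≠ 0 := by positivity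
          have hY2 : (‖y‖:ℝ)^2 ≠ 0 := by positivity
          field_simp
          ring
        have hzρ : ‖z‖ < ρ := by
          have h1 : ‖z‖^2 = ((1 - lam)⁻¹ * b)^2 * ‖w‖^2 := by
            rw [hz, norm_smul, Real.norm_eq_abs, mul_pow, sq_abs]
          rw [hw2] at h1
          have h2 : ((1 - lam)⁻¹ * b)^2 * (‖x - y‖ / (‖x‖ * ‖y‖))^2 < ρ^2 :=
            aux_zsq R ρ ‖x‖ ‖y‖ ‖x - y‖ t b lam hρ hρR hX hY hd hXY ht0 htR hbdef hb hlam
          rw [← h1] at h2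
          exact lt_of_pow_lt_pow_left₀ 2 hρ.le h2
        have hzball : z ∈ Metric.ball (0 : EuclideanSpace ℝ (Fin n)) ρ := by
          rwa [Metric.mem_ball, dist_zero_right]
        have hcomb : (1 - lam) • z + lam • (t • (‖x‖⁻¹ • x)) = (b / ‖y‖) • (‖y‖⁻¹ • y) := by
          rw [hz, hw, hlam]
          have hXne : ‖x‖ ≠ 0 := hX.ne'
          have hYne : ‖y‖ ≠ 0 := hY.ne'
          have htne : t ≠ 0 := ht0.ne'
          have h1lamne : (1:ℝ) - b / (‖x‖ * t) ≠ 0 := by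
            rw [hlam] at h1lam0; linarith
          have hXtb : ‖x‖ * t - b ≠ 0 := by
            have : 0 < (R ^ 2 / ρ) * ‖x - y‖ := by positivity
            rw [hbdef]; intro hcon; rw [sub_sub_cancel] at hcon; linarith [hcon]
          match_scalars
          · field_simp [hXtb]
          · field_simp [hXtb]
            ring
        have hqΩ : (b / ‖y‖) • (‖y‖⁻¹ • y) ∈ Ω := by
          rw [← hcomb]
          exact (hstar z hzball) htΩ (by linarith) hlam0.le (by ring)
        have hqTy : b / ‖y‖ ∈ Ty := ⟨div_pos hb hY, hqΩ⟩
        have hble : b / ‖y‖ ≤ sSup Ty := le_csSup hbTy hqTy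
        have hble2 : b ≤ ‖y‖ * sSup Ty := by
          have h3 := mul_le_mul_of_nonneg_left hble hY.le
          rw [mul_div_cancel₀ b hY.ne'] at h3
          · exact h3
        rw [hbdef] at hble2
        linarith
    by_cases hxy : x = y
    · rw [hxy, sub_self, abs_zero]; positivity
    by_cases hx : x = 0
    · rw [hx, hs0, zero_sub, abs_neg, abs_of_nonneg (hsnn y), zero_sub, norm_neg]
      calc s y ≤ R * ‖y‖ := hsub y
        _ ≤ (R^2/ρ) * ‖y‖ := mul_le_mul_of_nonneg_right hRC (norm_nonneg y)
    by_cases hy : y = 0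
    · rw [hy, hs0, sub_zero, abs_of_nonneg (hsnn x), sub_zero]
      calc s x ≤ R * ‖x‖ := hsub x
        _ ≤ (R^2/ρ) * ‖x‖ := mul_le_mul_of_nonneg_right hRC (norm_nonneg x)
    · rw [abs_sub_le_iff]
      constructor
      · have := key x y hx hy hxy
        linarith
      · have := key y x hy hx (fun h => hxy h.symm)
        rw [norm_sub_rev]
        linarith
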